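/- Minding's degree formula (upper bound form): let f, θ ∈ k[x][y] with y-degrees m, n, let b = deg_x B_0, and let y_1,...,y_n be the roots of θ in the field of Puiseux series in 1/x over k̄, with h_i = -val(y_i) (the 'degree' of y_i). Let k_i be the order of growth deg f(x, y_i) (i.e., -val of f(x,y_i) in the Puiseux field). Then deg_x Res_y(f, θ) ≤ m·b + k_1 + ... + k_n, and m·b + Σ k_i is an integer. -/

import Mathlib

open Polynomial

/-- The Sylvester-style matrix of `f` (of degree `m` in the variable) and `g`
(of degree `n`): an `(m+n) × (m+n)` matrix whose first `m` rows carry the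
coefficients of `g` (in descending order, shifted) and whose last `n` rows carry
the coefficients of `f`.  Its determinant is the resultant, normalized so that
`resultant m n f g = (leadingCoeff g)^m * ∏ f(β)` over the roots `β` of `g`. -/
noncomputable def sylvester {R : Type*} [CommRing R] (m n : ℕ) (f g : Polynomial R) :
    Matrix (Fin (m + n)) (Fin (m + n)) R :=
  Matrix.of fun i j =>
    if (i : ℕ) < m then
      (if (i : ℕ) ≤ (j : ℕ) ∧ (j : ℕ) ≤ (i : ℕ) + n then g.coeff (n + i - j) else 0)
    else
      (if (i : ℕ) - m ≤ (j : ℕ) ∧ (j : ℕ) ≤ ((i : ℕ) - m) + m then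
        f.coeff (m + ((i : ℕ) - m) - j) else 0)

/-- The resultant of `f` and `g`, viewed as polynomials of degrees `m` and `n`
respectively (eliminating their common variable). -/
noncomputable def resultant {R : Type*} [CommRing R] (m n : ℕ) (f g : Polynomial R) : R :=
  (sylvester m n f g).det

namespace Minding
variable {K : Type*} [CommRing K]

noncomputable def H (f : Polynomial K) (β : K) (m c : ℕ) : K :=
  ∑ r ∈ Finset.Icc c m, f.coeff r * β ^ (r - c)

lemma H_eval {f : Polynomial K} {β : K} {m : ℕ} (hf : f.natDegree ≤ m) :
    H f β m 0 = f.eval β := by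
  rw [H, eval_eq_sum_range' (Nat.lt_succ_of_le hf)]
  rw [show Finset.Icc 0 m = Finset.range (m+1) by ext j; simp [Nat.lt_succ_iff]]
  simp

lemma H_step {f : Polynomial K} {β : K} {m : ℕ} (hf : f.natDegree ≤ m) (c : ℕ) :
    H f β m c = f.coeff c + β * H f β m (c + 1) := by
  by_cases hc : c ≤ m
  · rw [H, show Finset.Icc c m = insert c (Finset.Icc (c+1) m) from by
        ext j; simp only [Finset.mem_Icc, Finset.mem_insert]; omega,
      Finset.sum_insert (by simp)]
    rw [H, Finset.mul_sum]
    congr 1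
    · simp
    · refine Finset.sum_congr rfl fun r hr => ?_
      simp only [Finset.mem_Icc] at hr
      rw [show r - c = (r - (c+1)) + 1 by omega, pow_succ]
      ring
  · have h1 : Finset.Icc c m = ∅ := Finset.Icc_eq_empty (by omega)
    have h2 : Finset.Icc (c+1) m = ∅ := Finset.Icc_eq_empty (by omega)
    rw [H, H, h1, h2, coeff_eq_zero_of_natDegree_lt (by omega)]
    simp

lemma gsum (g₁ : Polynomial K) (β : K) {n c : ℕ} (hg : g₁.natDegree ≤ n) (hc : 1 ≤ c) :
    ∑ r ∈ Finset.Icc c (n+1), ((X - C β) * g₁).coeff r * β ^ (r - c) = g₁.coeff (c - 1) := by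
  by_cases hcn : c ≤ n + 1
  · have hco : ∀ r, 1 ≤ r → ((X - C β) * g₁).coeff r = g₁.coeff (r-1) - β * g₁.coeff r := by
      intro r hr
      obtain ⟨s, rfl⟩ : ∃ s, r = s + 1 := ⟨r - 1, by omega⟩
      rw [sub_mul, coeff_sub, coeff_C_mul, coeff_X_mul]
      simp
    set F : ℕ → K := fun r => g₁.coeff r * β ^ (r - (c-1)) with hF
    have step1 : ∑ r ∈ Finset.Icc c (n+1), ((X - C β) * g₁).coeff r * β ^ (r - c)
        = ∑ r ∈ Finset.Icc c (n+1), (F (r-1) - F r) := by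
      refine Finset.sum_congr rfl fun r hr => ?_
      simp only [Finset.mem_Icc] at hr
      rw [hco r (by omega), hF]
      simp only
      rw [show r - 1 - (c-1) = r - c by omega, show r - (c-1) = (r-c)+1 by omega, pow_succ]
      ring
    have step2 : ∑ r ∈ Finset.Icc c (n+1), (F (r-1) - F r)
        = ∑ j ∈ Finset.range (n+2-c), ((fun j => F (c-1+j)) j - (fun j => F (c-1+j)) (j+1)) := by
      refine Finset.sum_nbij' (fun r => r - c) (fun j => c + j) ?_ ?_ ?_ ?_ ?_
      · intro r hr; simp only [Finset.mem_Icc] at hr; simp only [Finset.mem_range]; omega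
      · intro j hj; simp only [Finset.mem_range] at hj; simp only [Finset.mem_Icc]; omega
      · intro r hr; simp only [Finset.mem_Icc] at hr; omega
      · intro j hj; simp only [Finset.mem_range] at hj; omega
      · intro r hr; simp only [Finset.mem_Icc] at hr; dsimp only
        rw [show c - 1 + (r - c) = r - 1 by omega, show c - 1 + (r - c + 1) = r by omega]
    have hF1 : F (c - 1 + 0) = g₁.coeff (c - 1) := by
      simp only [hF]
      rw [show c - 1 + 0 = c - 1 by omega, show c - 1 - (c - 1) = 0 by omega, pow_zero, mul_one]
    have hF2 : F (c - 1 + (n + 2 - c)) = 0 := by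
      simp only [hF]
      rw [show c - 1 + (n + 2 - c) = n + 1 by omega,
        coeff_eq_zero_of_natDegree_lt (show g₁.natDegree < n + 1 by omega), zero_mul]
    rw [step1, step2, Finset.sum_range_sub' (fun j => F (c-1+j)) (n+2-c)]
    show F (c - 1 + 0) - F (c - 1 + (n + 2 - c)) = g₁.coeff (c - 1)
    rw [hF1, hF2, sub_zero]
  · rw [Finset.Icc_eq_empty (by omega), Finset.sum_empty,
      coeff_eq_zero_of_natDegree_lt (by omega)]

lemma sum_two_if (u v : ℕ → K) {N a b c : ℕ} (hb : b < N) :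
    ∑ j ∈ Finset.range N, (if a ≤ j ∧ j ≤ b then u j else 0) * (if j ≤ c then v j else 0)
      = ∑ j ∈ Finset.Icc a (min b c), u j * v j := by
  have key : ∀ j, (if a ≤ j ∧ j ≤ b then u j else 0) * (if j ≤ c then v j else 0)
      = if a ≤ j ∧ j ≤ min b c then u j * v j else 0 := by
    intro j
    rcases Classical.em (a ≤ j ∧ j ≤ b) with h1 | h1 <;> rcases Classical.em (j ≤ c) with h2 | h2
    · rw [if_pos h1, if_pos h2, if_pos ⟨h1.1, le_min h1.2 h2⟩]
    · rw [if_pos h1, if_neg h2, mul_zero, if_neg (show ¬(a ≤ j ∧ j ≤ min b c) from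
        fun hcon => h2 (le_trans hcon.2 (min_le_right b c)))]
    · rw [if_neg h1, zero_mul, if_neg (show ¬(a ≤ j ∧ j ≤ min b c) from
        fun hcon => h1 ⟨hcon.1, le_trans hcon.2 (min_le_left b c)⟩)]
    · rw [if_neg h1, zero_mul, if_neg (show ¬(a ≤ j ∧ j ≤ min b c) from
        fun hcon => h1 ⟨hcon.1, le_trans hcon.2 (min_le_left b c)⟩)]
  calc ∑ j ∈ Finset.range N, (if a ≤ j ∧ j ≤ b then u j else 0) * (if j ≤ c then v j else 0)
      = ∑ j ∈ Finset.range N, (if a ≤ j ∧ j ≤ min b c then u j * v j else 0) :=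
        Finset.sum_congr rfl fun j _ => key j
    _ = ∑ j ∈ Finset.Icc a (min b c), u j * v j := by
        rw [← Finset.sum_filter]
        congr 1
        ext j
        simp only [Finset.mem_filter, Finset.mem_range, Finset.mem_Icc]
        exact ⟨fun h => h.2, fun h =>
          ⟨lt_of_le_of_lt (le_trans h.2 (min_le_left _ _)) hb, h⟩⟩

lemma sum_two_if_fin {N : ℕ} (u v : ℕ → K) {a b c : ℕ} (hb : b < N) :
    ∑ j : Fin N, ((if a ≤ (j:ℕ) ∧ (j:ℕ) ≤ b then u (j:ℕ) else 0)
        * (if (j:ℕ) ≤ c then v (j:ℕ) else 0))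
      = ∑ j ∈ Finset.Icc a (min b c), u j * v j := by
  rw [← sum_two_if u v hb]
  exact Fin.sum_univ_eq_sum_range
    (fun j => (if a ≤ j ∧ j ≤ b then u j else 0) * (if j ≤ c then v j else 0)) N

lemma sum_delta_pair {N : ℕ} (β : K) (w : ℕ → K) (iv m : ℕ) (hiv : iv < N) :
    ∑ j : Fin N, ((if (j:ℕ) = iv then (1:K) else if m ≤ iv ∧ (j:ℕ) = iv + 1 then -β else 0)
        * w (j:ℕ))
      = w iv + (if m ≤ iv ∧ iv + 1 < N then -β * w (iv+1) else 0) := by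
  have key : ∀ j : ℕ, (if j = iv then (1:K) else if m ≤ iv ∧ j = iv+1 then -β else 0) * w j
      = (if j = iv then w j else 0)
        + (if j = iv+1 then (if m ≤ iv then -β * w j else 0) else 0) := by
    intro j
    rcases Classical.em (j = iv) with h1 | h1
    · rw [if_pos h1, if_pos h1, if_neg (by omega), one_mul, add_zero]
    · rw [if_neg h1, if_neg h1, zero_add]
      rcases Classical.em (j = iv + 1) with h2 | h2
      · rw [if_pos h2]
        rcases Classical.em (m ≤ iv) with h3 | h3
        · rw [if_pos ⟨h3, h2⟩, if_pos h3]
        · rw [if_neg (fun hc => h3 hc.1), if_neg h3, zero_mul]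
      · rw [if_neg h2, if_neg (fun hc => h2 hc.2), zero_mul]
  calc ∑ j : Fin N, ((if (j:ℕ) = iv then (1:K) else if m ≤ iv ∧ (j:ℕ) = iv + 1 then -β else 0)
          * w (j:ℕ))
      = ∑ j ∈ Finset.range N, ((if j = iv then (1:K) else if m ≤ iv ∧ j = iv+1 then -β else 0)
          * w j) :=
        Fin.sum_univ_eq_sum_range
          (fun j => (if j = iv then (1:K) else if m ≤ iv ∧ j = iv+1 then -β else 0) * w j) N
    _ = ∑ j ∈ Finset.range N, ((if j = iv then w j else 0)
          + (if j = iv+1 then (if m ≤ iv then -β * w j else 0) else 0)) :=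
        Finset.sum_congr rfl fun j _ => key j
    _ = w iv + (if m ≤ iv ∧ iv + 1 < N then -β * w (iv+1) else 0) := by
        rw [Finset.sum_add_distrib, Finset.sum_ite_eq' (Finset.range N) iv w,
          Finset.sum_ite_eq' (Finset.range N) (iv+1) (fun j => if m ≤ iv then -β * w j else 0)]
        simp only [Finset.mem_range, hiv, if_true]
        congr 1
        rcases Classical.em (iv + 1 < N) with h4 | h4
        · rw [if_pos h4]
          rcases Classical.em (m ≤ iv) with h5 | h5
          · rw [if_pos h5, if_pos ⟨h5, h4⟩]
          · rw [if_neg h5, if_neg (fun hc => h5 hc.1)]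
        · rw [if_neg h4, if_neg (fun hc => h4 hc.2)]

lemma sum_reflect (F : ℕ → K) {a b c : ℕ} (hac : a ≤ c) (hbc : b ≤ c) :
    ∑ j ∈ Finset.Icc a b, F j = ∑ r ∈ Finset.Icc (c - b) (c - a), F (c - r) := by
  refine Finset.sum_nbij' (fun j => c - j) (fun r => c - r) ?_ ?_ ?_ ?_ ?_
  · intro j hj; simp only [Finset.mem_Icc] at *; omega
  · intro r hr; simp only [Finset.mem_Icc] at *; omega
  · intro j hj; simp only [Finset.mem_Icc] at hj; omega
  · intro r hr; simp only [Finset.mem_Icc] at hr; omega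
  · intro j hj; simp only [Finset.mem_Icc] at hj
    rw [show c - (c - j) = j by omega]

lemma msum_neg {α : Type*} (g : α → ℚ) (s : Multiset α) :
    (s.map fun a => -g a).sum = -(s.map g).sum := by
  induction s using Multiset.induction_on with
  | empty => simp
  | cons a s ih => simp only [Multiset.map_cons, Multiset.sum_cons, ih]; ring


noncomputable def matT (β : K) (N : ℕ) : Matrix (Fin N) (Fin N) K :=
  Matrix.of fun j k => if (j : ℕ) ≤ (k : ℕ) then β ^ ((k : ℕ) - (j : ℕ)) else 0

noncomputable def matE (m : ℕ) (β : K) (N : ℕ) : Matrix (Fin N) (Fin N) K :=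
  Matrix.of fun i j =>
    if (j : ℕ) = (i : ℕ) then 1
    else if m ≤ (i : ℕ) ∧ (j : ℕ) = (i : ℕ) + 1 then -β else 0

noncomputable def aEnt (m n : ℕ) (f g₁ : Polynomial K) (β : K) (i k : ℕ) : K :=
  if i < m then (if i ≤ k ∧ k ≤ i + n then g₁.coeff (n + i - k) else 0)
  else if k ≤ i then H f β m (i - k) else β ^ (k - i) * f.eval β

noncomputable def mEnt (m n : ℕ) (f g₁ : Polynomial K) (β : K) (i k : ℕ) : K :=
  if i < m then (if i ≤ k ∧ k ≤ i + n then g₁.coeff (n + i - k) else 0)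
  else if i < m + n then (if k ≤ i then f.coeff (i - k) else 0)
  else H f β m (m + n - k)

lemma det_matT (β : K) (N : ℕ) : (matT β N).det = 1 := by
  rw [Matrix.det_of_upperTriangular (M := matT β N)]
  · refine Finset.prod_eq_one fun i _ => ?_
    simp [matT]
  · intro i j hij
    have h : (j : ℕ) < (i : ℕ) := hij
    simp only [matT, Matrix.of_apply]
    rw [if_neg (by omega)]

lemma det_matE (m : ℕ) (β : K) (N : ℕ) : (matE m β N).det = 1 := by
  rw [Matrix.det_of_upperTriangular (M := matE m β N)]
  · refine Finset.prod_eq_one fun i _ => ?_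
    simp [matE]
  · intro i j hij
    have h : (j : ℕ) < (i : ℕ) := hij
    simp only [matE, Matrix.of_apply]
    rw [if_neg (by omega), if_neg (by omega)]


lemma sum_eval {f : Polynomial K} {β : K} {m : ℕ} (hf : f.natDegree ≤ m) :
    ∑ r ∈ Finset.Icc 0 m, f.coeff r * β ^ (r - 0) = f.eval β := H_eval hf

lemma ST_eq [Nontrivial K] (m n : ℕ) (f g₁ : Polynomial K) (β : K)
    (hf : f.natDegree ≤ m) (hg : g₁.natDegree ≤ n) :
    sylvester m (n+1) f ((X - C β) * g₁) * matT β (m + (n+1))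
      = Matrix.of fun i k : Fin (m + (n+1)) => aEnt m n f g₁ β (i : ℕ) (k : ℕ) := by
  have hgdeg : ((X - C β) * g₁).natDegree ≤ n + 1 := by
    refine le_trans natDegree_mul_le ?_
    rw [natDegree_X_sub_C]
    omega
  have hgeval : ((X - C β) * g₁).eval β = 0 := by simp
  ext i k
  have hiv : (i : ℕ) < m + (n+1) := i.isLt
  have hkv : (k : ℕ) < m + (n+1) := k.isLt
  rw [Matrix.mul_apply]
  simp only [_root_.sylvester, matT, Matrix.of_apply]
  by_cases him : (i : ℕ) < m
  · simp only [him, if_true]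
    have h2if := sum_two_if_fin (N := m + (n+1))
      (fun j => ((X - C β) * g₁).coeff ((n+1) + (i : ℕ) - j))
      (fun j => β ^ ((k : ℕ) - j))
      (a := (i:ℕ)) (b := (i:ℕ) + (n+1)) (c := (k:ℕ)) (by omega)
    rw [h2if]
    rw [aEnt, if_pos him]
    by_cases hki : (k : ℕ) < (i : ℕ)
    · rw [Finset.Icc_eq_empty (by omega : ¬ (i:ℕ) ≤ min ((i:ℕ)+(n+1)) (k:ℕ)), Finset.sum_empty,
        if_neg (by omega)]
    · by_cases hkn : (k : ℕ) ≤ (i : ℕ) + n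
      · rw [min_eq_right (by omega : (k:ℕ) ≤ (i:ℕ)+(n+1))]
        rw [sum_reflect _ (c := (n+1) + (i:ℕ)) (by omega) (by omega)]
        rw [show (n+1) + (i:ℕ) - (i:ℕ) = n+1 by omega]
        have hcong : ∑ r ∈ Finset.Icc ((n+1) + (i:ℕ) - (k:ℕ)) (n+1),
              ((X - C β) * g₁).coeff ((n+1) + (i:ℕ) - ((n+1) + (i:ℕ) - r))
                * β ^ ((k:ℕ) - ((n+1) + (i:ℕ) - r))
            = ∑ r ∈ Finset.Icc ((n+1) + (i:ℕ) - (k:ℕ)) (n+1),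
              ((X - C β) * g₁).coeff r * β ^ (r - ((n+1) + (i:ℕ) - (k:ℕ))) := by
          refine Finset.sum_congr rfl fun r hr => ?_
          simp only [Finset.mem_Icc] at hr
          rw [show (n+1) + (i:ℕ) - ((n+1) + (i:ℕ) - r) = r by omega,
            show (k:ℕ) - ((n+1) + (i:ℕ) - r) = r - ((n+1) + (i:ℕ) - (k:ℕ)) by omega]
        rw [hcong, gsum g₁ β hg (by omega)]
        rw [if_pos (show (i:ℕ) ≤ (k:ℕ) ∧ (k:ℕ) ≤ (i:ℕ) + n by omega),
          show (n+1) + (i:ℕ) - (k:ℕ) - 1 = n + (i:ℕ) - (k:ℕ) by omega]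
      · rw [min_eq_left (by omega : (i:ℕ)+(n+1) ≤ (k:ℕ))]
        rw [sum_reflect _ (c := (n+1) + (i:ℕ)) (by omega) (by omega)]
        rw [show (n+1) + (i:ℕ) - ((i:ℕ) + (n+1)) = 0 by omega,
          show (n+1) + (i:ℕ) - (i:ℕ) = n+1 by omega]
        have hcong : ∑ r ∈ Finset.Icc 0 (n+1),
              ((X - C β) * g₁).coeff ((n+1) + (i:ℕ) - ((n+1) + (i:ℕ) - r))
                * β ^ ((k:ℕ) - ((n+1) + (i:ℕ) - r))
            = ∑ r ∈ Finset.Icc 0 (n+1),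
              (((X - C β) * g₁).coeff r * β ^ (r - 0)) * β ^ ((k:ℕ) - ((n+1) + (i:ℕ))) := by
          refine Finset.sum_congr rfl fun r hr => ?_
          simp only [Finset.mem_Icc] at hr
          rw [show (n+1) + (i:ℕ) - ((n+1) + (i:ℕ) - r) = r by omega,
            show (k:ℕ) - ((n+1) + (i:ℕ) - r) = (r - 0) + ((k:ℕ) - ((n+1) + (i:ℕ))) by omega,
            pow_add, ← mul_assoc]
        rw [hcong, ← Finset.sum_mul, sum_eval hgdeg, hgeval, zero_mul, if_neg (by omega)]
  · simp only [him, if_false]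
    have h2if := sum_two_if_fin (N := m + (n+1))
      (fun j => f.coeff (m + ((i : ℕ) - m) - j))
      (fun j => β ^ ((k : ℕ) - j))
      (a := (i:ℕ) - m) (b := ((i:ℕ) - m) + m) (c := (k:ℕ)) (by omega)
    rw [h2if]
    rw [aEnt, if_neg him]
    rw [show ((i:ℕ) - m) + m = (i:ℕ) by omega]
    by_cases hk : (k : ℕ) ≤ (i : ℕ)
    · rw [min_eq_right hk]
      rw [sum_reflect _ (c := (i:ℕ)) (by omega) (by omega)]
      rw [show (i:ℕ) - ((i:ℕ) - m) = m by omega]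
      have hcong : ∑ r ∈ Finset.Icc ((i:ℕ) - (k:ℕ)) m,
            f.coeff (m + ((i:ℕ) - m) - ((i:ℕ) - r)) * β ^ ((k:ℕ) - ((i:ℕ) - r))
          = ∑ r ∈ Finset.Icc ((i:ℕ) - (k:ℕ)) m,
            f.coeff r * β ^ (r - ((i:ℕ) - (k:ℕ))) := by
        refine Finset.sum_congr rfl fun r hr => ?_
        simp only [Finset.mem_Icc] at hr
        rw [show m + ((i:ℕ) - m) - ((i:ℕ) - r) = r by omega,
          show (k:ℕ) - ((i:ℕ) - r) = r - ((i:ℕ) - (k:ℕ)) by omega]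
      rw [hcong, if_pos hk]
      rfl
    · rw [min_eq_left (by omega : (i:ℕ) ≤ (k:ℕ))]
      rw [sum_reflect _ (c := (i:ℕ)) (by omega) (by omega)]
      rw [show (i:ℕ) - ((i:ℕ) - m) = m by omega, show (i:ℕ) - (i:ℕ) = 0 by omega]
      have hcong : ∑ r ∈ Finset.Icc 0 m,
            f.coeff (m + ((i:ℕ) - m) - ((i:ℕ) - r)) * β ^ ((k:ℕ) - ((i:ℕ) - r))
          = ∑ r ∈ Finset.Icc 0 m,
            (f.coeff r * β ^ (r - 0)) * β ^ ((k:ℕ) - (i:ℕ)) := by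
        refine Finset.sum_congr rfl fun r hr => ?_
        simp only [Finset.mem_Icc] at hr
        rw [show m + ((i:ℕ) - m) - ((i:ℕ) - r) = r by omega,
          show (k:ℕ) - ((i:ℕ) - r) = (r - 0) + ((k:ℕ) - (i:ℕ)) by omega,
          pow_add, ← mul_assoc]
      rw [hcong, ← Finset.sum_mul, sum_eval hf, if_neg hk, mul_comm]


lemma EA_eq (m n : ℕ) (f g₁ : Polynomial K) (β : K) (hf : f.natDegree ≤ m) :
    matE m β (m + (n+1)) * (Matrix.of fun i k : Fin (m + (n+1)) => aEnt m n f g₁ β (i : ℕ) (k : ℕ))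
      = Matrix.of fun i k : Fin (m + (n+1)) => mEnt m n f g₁ β (i : ℕ) (k : ℕ) := by
  ext i k
  have hiv : (i : ℕ) < m + (n+1) := i.isLt
  have hkv : (k : ℕ) < m + (n+1) := k.isLt
  rw [Matrix.mul_apply]
  simp only [matE, Matrix.of_apply]
  have hdp := sum_delta_pair (N := m + (n+1)) β
    (fun j => aEnt m n f g₁ β j (k : ℕ)) (i : ℕ) m i.isLt
  rw [hdp]
  by_cases him : (i : ℕ) < m
  · rw [if_neg (show ¬ (m ≤ (i:ℕ) ∧ (i:ℕ) + 1 < m + (n+1)) from fun hc => by omega), add_zero]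
    rw [aEnt, mEnt, if_pos him, if_pos him]
  · by_cases hin : (i : ℕ) < m + n
    · rw [if_pos (show m ≤ (i:ℕ) ∧ (i:ℕ) + 1 < m + (n+1) by omega)]
      rw [mEnt, if_neg him, if_pos hin]
      rw [aEnt, if_neg him, aEnt, if_neg (show ¬ ((i:ℕ) + 1 < m) by omega)]
      by_cases hk : (k : ℕ) ≤ (i : ℕ)
      · rw [if_pos hk, if_pos (show (k:ℕ) ≤ (i:ℕ) + 1 by omega), if_pos hk]
        rw [show (i:ℕ) + 1 - (k:ℕ) = ((i:ℕ) - (k:ℕ)) + 1 by omega,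
          H_step hf ((i:ℕ) - (k:ℕ))]
        ring
      · by_cases hk1 : (k : ℕ) ≤ (i : ℕ) + 1
        · rw [if_neg hk, if_pos hk1, if_neg hk]
          rw [show (i:ℕ) + 1 - (k:ℕ) = 0 by omega, show (k:ℕ) - (i:ℕ) = 1 by omega,
            H_eval hf]
          ring
        · rw [if_neg hk, if_neg (show ¬ (k:ℕ) ≤ (i:ℕ) + 1 by omega), if_neg hk]
          rw [show (k:ℕ) - (i:ℕ) = ((k:ℕ) - ((i:ℕ)+1)) + 1 by omega, pow_succ]
          ring
    · rw [if_neg (show ¬ (m ≤ (i:ℕ) ∧ (i:ℕ) + 1 < m + (n+1)) from fun hc => by omega), add_zero]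
      rw [aEnt, if_neg him, if_pos (show (k:ℕ) ≤ (i:ℕ) by omega),
        mEnt, if_neg him, if_neg hin, show (i:ℕ) - (k:ℕ) = m + n - (k:ℕ) by omega]

lemma syl_det_step [Nontrivial K] (m n : ℕ) (f g₁ : Polynomial K) (β : K)
    (hf : f.natDegree ≤ m) (hg : g₁.natDegree ≤ n) :
    (sylvester m (n+1) f ((X - C β) * g₁)).det = f.eval β * (sylvester m n f g₁).det := by
  have h1 : (sylvester m (n+1) f ((X - C β) * g₁)).det
      = (matE m β (m + (n+1)) * (sylvester m (n+1) f ((X - C β) * g₁) * matT β (m + (n+1)))).det := by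
    rw [Matrix.det_mul, Matrix.det_mul, det_matT, det_matE, one_mul, mul_one]
  rw [h1, ST_eq m n f g₁ β hf hg, EA_eq m n f g₁ β hf]
  set e : (Fin (m+n) ⊕ Fin 1) ≃ Fin (m + (n+1)) := finSumFinEquiv with he
  rw [← Matrix.det_submatrix_equiv_self e]
  have hblock : (Matrix.of fun i k : Fin (m + (n+1)) =>
        mEnt m n f g₁ β (i : ℕ) (k : ℕ)).submatrix e e
      = Matrix.fromBlocks (sylvester m n f g₁) 0
          (Matrix.of fun (_ : Fin 1) (kk : Fin (m+n)) => H f β m (m + n - (kk : ℕ)))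
          (Matrix.of fun (_ : Fin 1) (_ : Fin 1) => f.eval β) := by
    ext x y
    cases x with
    | inl ii =>
      cases y with
      | inl kk =>
        have h1 : ((e (Sum.inl ii) : Fin (m+(n+1))) : ℕ) = (ii : ℕ) := by
          rfl
        have h2 : ((e (Sum.inl kk) : Fin (m+(n+1))) : ℕ) = (kk : ℕ) := by
          rfl
        simp only [Matrix.submatrix_apply, Matrix.of_apply, Matrix.fromBlocks_apply₁₁, h1, h2]
        have hii : (ii : ℕ) < m + n := ii.isLt
        rw [mEnt, _root_.sylvester]
        simp only [Matrix.of_apply]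
        by_cases hm : (ii : ℕ) < m
        · rw [if_pos hm, if_pos hm]
        · rw [if_neg hm, if_neg hm, if_pos hii]
          by_cases hk : (kk : ℕ) ≤ (ii : ℕ)
          · by_cases hk2 : (ii : ℕ) - m ≤ (kk : ℕ)
            · rw [if_pos hk, if_pos (show (ii:ℕ) - m ≤ (kk:ℕ) ∧ (kk:ℕ) ≤ ((ii:ℕ) - m) + m by omega),
                show m + ((ii:ℕ) - m) - (kk:ℕ) = (ii:ℕ) - (kk:ℕ) by omega]
            · rw [if_pos hk, if_neg (show ¬ ((ii:ℕ) - m ≤ (kk:ℕ) ∧ (kk:ℕ) ≤ ((ii:ℕ) - m) + m)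
                  from fun hc => hk2 hc.1),
                coeff_eq_zero_of_natDegree_lt (show f.natDegree < (ii:ℕ) - (kk:ℕ) by omega)]
          · rw [if_neg hk, if_neg (show ¬ ((ii:ℕ) - m ≤ (kk:ℕ) ∧ (kk:ℕ) ≤ ((ii:ℕ) - m) + m)
                from fun hc => by omega)]
      | inr jj =>
        have h1 : ((e (Sum.inl ii) : Fin (m+(n+1))) : ℕ) = (ii : ℕ) := by
          rfl
        have h2 : ((e (Sum.inr jj) : Fin (m+(n+1))) : ℕ) = (m + n) + (jj : ℕ) := by
          rfl
        have hjj : (jj : ℕ) < 1 := jj.isLt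
        have hii : (ii : ℕ) < m + n := ii.isLt
        simp only [Matrix.submatrix_apply, Matrix.of_apply, Matrix.fromBlocks_apply₁₂, h1, h2]
        rw [mEnt]
        by_cases hm : (ii : ℕ) < m
        · rw [if_pos hm, if_neg (show ¬ ((ii:ℕ) ≤ m + n + (jj:ℕ) ∧ m + n + (jj:ℕ) ≤ (ii:ℕ) + n)
            from fun hc => by omega)]
          rfl
        · rw [if_neg hm, if_pos hii, if_neg (show ¬ (m + n + (jj:ℕ) ≤ (ii:ℕ)) by omega)]
          rfl
    | inr jj =>
      cases y with
      | inl kk =>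
        have h1 : ((e (Sum.inr jj) : Fin (m+(n+1))) : ℕ) = (m + n) + (jj : ℕ) := by
          rfl
        have h2 : ((e (Sum.inl kk) : Fin (m+(n+1))) : ℕ) = (kk : ℕ) := by
          rfl
        have hjj : (jj : ℕ) < 1 := jj.isLt
        simp only [Matrix.submatrix_apply, Matrix.of_apply, Matrix.fromBlocks_apply₂₁, h1, h2]
        rw [mEnt, if_neg (show ¬ (m + n + (jj:ℕ) < m) by omega),
          if_neg (show ¬ (m + n + (jj:ℕ) < m + n) by omega)]
      | inr jj2 =>
        have h1 : ((e (Sum.inr jj) : Fin (m+(n+1))) : ℕ) = (m + n) + (jj : ℕ) := by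
          rfl
        have h2 : ((e (Sum.inr jj2) : Fin (m+(n+1))) : ℕ) = (m + n) + (jj2 : ℕ) := by
          rfl
        have hjj : (jj : ℕ) < 1 := jj.isLt
        have hjj2 : (jj2 : ℕ) < 1 := jj2.isLt
        simp only [Matrix.submatrix_apply, Matrix.of_apply, Matrix.fromBlocks_apply₂₂, h1, h2]
        rw [mEnt, if_neg (show ¬ (m + n + (jj:ℕ) < m) by omega),
          if_neg (show ¬ (m + n + (jj:ℕ) < m + n) by omega),
          show m + n - (m + n + (jj2:ℕ)) = 0 by omega, H_eval hf]
  rw [hblock, Matrix.det_fromBlocks_zero₁₂, Matrix.det_fin_one]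
  simp only [Matrix.of_apply]
  ring


lemma syl_det_base (m : ℕ) (f : Polynomial K) (c : K) :
    (sylvester m 0 f (C c)).det = c ^ m := by
  have hdiag : sylvester m 0 f (C c) = Matrix.diagonal (fun _ : Fin (m + 0) => c) := by
    ext i j
    have hiv : (i : ℕ) < m + 0 := i.isLt
    simp only [_root_.sylvester, Matrix.of_apply]
    rw [if_pos (show (i:ℕ) < m by omega)]
    by_cases h : i = j
    · subst h
      rw [if_pos ⟨le_refl _, by omega⟩, Matrix.diagonal_apply_eq,
        show 0 + (i:ℕ) - (i:ℕ) = 0 by omega, coeff_C_zero]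
    · have hne : (i : ℕ) ≠ (j : ℕ) := fun hc => h (Fin.ext hc)
      rw [if_neg (fun hc => hne (by omega)), Matrix.diagonal_apply_ne _ h]
  rw [hdiag, Matrix.det_diagonal, Finset.prod_const, Finset.card_univ, Fintype.card_fin, Nat.add_zero]

lemma syl_det_prod [IsDomain K] (m : ℕ) (f : Polynomial K) (hf : f.natDegree ≤ m) (c : K) :
    ∀ s : Multiset K,
      (sylvester m (Multiset.card s) f (C c * (s.map fun a => X - C a).prod)).det
        = c ^ m * (s.map fun a => f.eval a).prod := by
  intro s
  induction s using Multiset.induction_on with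
  | empty =>
    simp only [Multiset.card_zero, Multiset.map_zero, Multiset.prod_zero, mul_one]
    rw [syl_det_base]
  | cons β s ih =>
    have hcard : Multiset.card (β ::ₘ s) = Multiset.card s + 1 := by
      rw [Multiset.card_cons]
    have hg1 : (C c * (s.map fun a => X - C a).prod).natDegree ≤ Multiset.card s := by
      refine le_trans natDegree_mul_le ?_
      rw [natDegree_C, natDegree_multiset_prod_X_sub_C_eq_card]
      omega
    have hfac : C c * ((β ::ₘ s).map fun a => X - C a).prod
        = (X - C β) * (C c * (s.map fun a => X - C a).prod) := by
      rw [Multiset.map_cons, Multiset.prod_cons]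
      ring
    rw [hcard, hfac, syl_det_step m (Multiset.card s) f _ β hf hg1, ih,
      Multiset.map_cons, Multiset.prod_cons]
    ring

end Minding

/-- Minding's degree bound.  `K` plays the role of the field of Puiseux series in
`1/x` over `k̄` (algebraically closed, with a valuation `valq` satisfying
`valq p = -deg p` on polynomials), `ι : k̄[x] →+* K` the embedding.  With
`b = deg_x B₀`, roots `y₁,…,y_n` of `θ` in `K` and `kᵢ = -valq f(x,yᵢ)`,
`deg_x Res_y(f,θ) ≤ m·b + k₁ + ⋯ + k_n`, and `m·b + Σ kᵢ` is an integer. -/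
theorem stmt13 {k K : Type*} [Field k] [IsAlgClosed k] [CharZero k]
    [Field K] [IsAlgClosed K]
    (ι : Polynomial k →+* K) (valq : K → ℚ)
    (hval_mul : ∀ a b : K, a ≠ 0 → b ≠ 0 → valq (a * b) = valq a + valq b)
    (hval_add : ∀ a b : K, a ≠ 0 → b ≠ 0 → a + b ≠ 0 → min (valq a) (valq b) ≤ valq (a + b))
    (hval_poly : ∀ p : Polynomial k, p ≠ 0 → valq (ι p) = -(p.natDegree : ℚ))
    (m n : ℕ) (f θ : Polynomial (Polynomial k))
    (hfm : f.natDegree = m) (hθn : θ.natDegree = n) (hθ0 : θ ≠ 0)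
    (hnz : ∀ y ∈ (θ.map ι).roots, (f.map ι).eval y ≠ 0) :
    ((resultant m n f θ).natDegree : ℚ)
        ≤ m * θ.leadingCoeff.natDegree +
          ((θ.map ι).roots.map fun y => -valq ((f.map ι).eval y)).sum ∧
      ∃ z : ℤ,
        (m * θ.leadingCoeff.natDegree : ℚ) +
            ((θ.map ι).roots.map fun y => -valq ((f.map ι).eval y)).sum = z := by
  classical
  have hinj : Function.Injective ι := by
    rw [injective_iff_map_eq_zero ι]
    intro p hp
    by_contra hp0
    have h1 := hval_poly p hp0
    have h2 := hval_poly (p * p) (mul_ne_zero hp0 hp0)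
    rw [map_mul, hp, mul_zero] at h2
    rw [hp] at h1
    rw [natDegree_mul hp0 hp0] at h2
    have hdeg : p.natDegree = 0 := by
      have : (p.natDegree : ℚ) = 0 := by push_cast at h1 h2 ⊢; linarith
      exact_mod_cast this
    have hpC : p = C (p.coeff 0) := Polynomial.eq_C_of_natDegree_eq_zero hdeg
    have hc0 : p.coeff 0 ≠ 0 := fun h0 => hp0 (by rw [hpC, h0, map_zero])
    have hu : IsUnit p := by
      rw [hpC]
      exact Polynomial.isUnit_C.mpr (isUnit_iff_ne_zero.mpr hc0)
    exact (hu.map ι).ne_zero hp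
  have hc0 : θ.leadingCoeff ≠ 0 := leadingCoeff_ne_zero.mpr hθ0
  have hcK : ι θ.leadingCoeff ≠ 0 := fun h => hc0 (hinj (by rw [h, map_zero]))
  have hlc : (θ.map ι).leadingCoeff = ι θ.leadingCoeff :=
    leadingCoeff_map_of_leadingCoeff_ne_zero ι hcK
  have hcKlc : (θ.map ι).leadingCoeff ≠ 0 := by rw [hlc]; exact hcK
  have hdegm : (θ.map ι).natDegree = n := by
    rw [natDegree_map_of_leadingCoeff_ne_zero ι hcK, hθn]
  have hsp : (θ.map ι).Splits := IsAlgClosed.splits (θ.map ι)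
  have hcard : Multiset.card (θ.map ι).roots = n := by
    rw [← hdegm]
    exact splits_iff_card_roots.mp hsp
  have hfac := hsp.eq_prod_roots
  have hfK : (f.map ι).natDegree ≤ m := by rw [← hfm]; exact natDegree_map_le
  have key1 := Minding.syl_det_prod m (f.map ι) hfK (θ.map ι).leadingCoeff (θ.map ι).roots
  rw [← hfac] at key1
  rw [hcard] at key1
  have hmapS : (sylvester m n f θ).map ι = sylvester m n (f.map ι) (θ.map ι) := by
    ext i j
    simp only [_root_.sylvester, Matrix.map_apply, Matrix.of_apply]
    split_ifs <;> simp [coeff_map]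
  have key : ι (resultant m n f θ)
      = (θ.map ι).leadingCoeff ^ m * ((θ.map ι).roots.map fun a => (f.map ι).eval a).prod := by
    rw [_root_.resultant, RingHom.map_det, RingHom.mapMatrix_apply, hmapS, key1]
  have hallne : ∀ a ∈ (θ.map ι).roots.map (fun y => (f.map ι).eval y), a ≠ 0 := by
    intro a ha
    obtain ⟨y, hy, rfl⟩ := Multiset.mem_map.mp ha
    exact hnz y hy
  have hprodne : ((θ.map ι).roots.map fun y => (f.map ι).eval y).prod ≠ 0 :=
    Multiset.prod_ne_zero (fun h0 => hallne 0 h0 rfl)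
  have hcKpow : (θ.map ι).leadingCoeff ^ m ≠ 0 := pow_ne_zero _ hcKlc
  have hRK : ι (resultant m n f θ) ≠ 0 := by
    rw [key]
    exact mul_ne_zero hcKpow hprodne
  have hR : resultant m n f θ ≠ 0 := fun h => hRK (by rw [h, map_zero])
  have hval1 : valq 1 = 0 := by
    have := hval_mul 1 1 one_ne_zero one_ne_zero
    rw [mul_one] at this
    linarith
  have hvalpow : ∀ a : K, a ≠ 0 → ∀ j : ℕ, valq (a ^ j) = j * valq a := by
    intro a ha j
    induction j with
    | zero => simpa using hval1
    | succ i ihj =>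
      rw [pow_succ, hval_mul _ _ (pow_ne_zero _ ha) ha, ihj]
      push_cast
      ring
  have hvalprod : ∀ s : Multiset K, (∀ a ∈ s, a ≠ 0) → valq s.prod = (s.map valq).sum := by
    intro s
    induction s using Multiset.induction_on with
    | empty => intro _; simpa using hval1
    | cons a s ih =>
      intro hs
      have hsne : s.prod ≠ 0 :=
        Multiset.prod_ne_zero (fun h0 => hs 0 (Multiset.mem_cons_of_mem h0) rfl)
      rw [Multiset.prod_cons, Multiset.map_cons, Multiset.sum_cons,
        hval_mul _ _ (hs a (Multiset.mem_cons_self a s)) hsne,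
        ih (fun x hx => hs x (Multiset.mem_cons_of_mem hx))]
  have e1 : valq (ι (resultant m n f θ)) = -((resultant m n f θ).natDegree : ℚ) :=
    hval_poly _ hR
  have e2 : valq (ι (resultant m n f θ))
      = m * valq ((θ.map ι).leadingCoeff)
        + ((θ.map ι).roots.map fun y => valq ((f.map ι).eval y)).sum := by
    rw [key, hval_mul _ _ hcKpow hprodne, hvalpow _ hcKlc m, hvalprod _ hallne,
      Multiset.map_map]
    rfl
  have e3 : valq ((θ.map ι).leadingCoeff) = -(θ.leadingCoeff.natDegree : ℚ) := by
    rw [hlc]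
    exact hval_poly _ hc0
  have hneg : ((θ.map ι).roots.map fun y => -valq ((f.map ι).eval y)).sum
      = -((θ.map ι).roots.map fun y => valq ((f.map ι).eval y)).sum :=
    Minding.msum_neg _ _
  have main_eq : (m : ℚ) * (θ.leadingCoeff.natDegree : ℚ)
      + ((θ.map ι).roots.map fun y => -valq ((f.map ι).eval y)).sum
      = ((resultant m n f θ).natDegree : ℚ) := by
    have h4 := e1.symm.trans e2
    rw [e3] at h4
    rw [hneg]
    have h5 : (m : ℚ) * -(θ.leadingCoeff.natDegree : ℚ)
        = -((m : ℚ) * (θ.leadingCoeff.natDegree : ℚ)) := by ring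
    rw [h5] at h4
    linarith
  constructor
  · exact le_of_eq main_eq.symm
  · refine ⟨((resultant m n f θ).natDegree : ℤ), ?_⟩
    rw [main_eq]
    push_cast
    rfl
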